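/- Let p_1 and p_3 be odd primes with p_1 ≡ 1 (mod 4) and p_3 ≡ 3 (mod 4). Then the number of equivalence classes (under x ↦ x+t) of integer quadratics f = ax^2+bx+c with b even and a(b^2-4ac) = 4·p_1·p_3 equals 10 + 2·(p_3/p_1), where (p_3/p_1) is the Legendre symbol. -/
import Mathlib


/-- The superdiscriminant `I(f) = a*(b^2 - 4*a*c)` of the integer quadratic
polynomial `f(x) = a*x^2 + b*x + c`, encoded as the triple `(a, b, c)`. -/
def superdisc (p : ℤ × ℤ × ℤ) : ℤ := p.1 * (p.2.1 ^ 2 - 4 * p.1 * p.2.2)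

/-- Equivalence of integer quadratics under the substitution `x ↦ x + t`, `t ∈ ℤ`:
`a*(x+t)^2 + b*(x+t) + c = a*x^2 + (b + 2*a*t)*x + (a*t^2 + b*t + c)`. -/
def quadEquiv (p q : ℤ × ℤ × ℤ) : Prop :=
  ∃ t : ℤ, q = (p.1, p.2.1 + 2 * p.1 * t, p.1 * t ^ 2 + p.2.1 * t + p.2.2)

/-- The number of equivalence classes (under `x ↦ x + t`) of integer quadratics
with superdiscriminant `n` satisfying the extra condition `P`. -/
noncomputable def quadCount (n : ℤ) (P : ℤ × ℤ × ℤ → Prop) : ℕ :=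
  Nat.card (Quot (fun p q : {p : ℤ × ℤ × ℤ // superdisc p = n ∧ P p} =>
    quadEquiv p.1 q.1))

namespace QC

def shift (p : ℤ × ℤ × ℤ) (t : ℤ) : ℤ × ℤ × ℤ :=
  (p.1, p.2.1 + 2 * p.1 * t, p.1 * t ^ 2 + p.2.1 * t + p.2.2)

lemma superdisc_shift (p : ℤ × ℤ × ℤ) (t : ℤ) : superdisc (shift p t) = superdisc p := by
  simp only [superdisc, shift]; ring

lemma shift_shift (p : ℤ × ℤ × ℤ) (t s : ℤ) : shift (shift p t) s = shift p (t + s) := by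
  simp only [shift]; refine Prod.ext rfl (Prod.ext ?_ ?_) <;> simp <;> ring

lemma shift_zero (p : ℤ × ℤ × ℤ) : shift p 0 = p := by
  simp only [shift]; refine Prod.ext rfl (Prod.ext ?_ ?_) <;> simp

lemma sign_mul_self {a : ℤ} (ha : a ≠ 0) : a * a.sign = |a| := by
  rcases lt_trichotomy a 0 with h | h | h
  · simp [Int.sign_eq_neg_one_of_neg h, abs_of_neg h]
  · exact absurd h ha
  · simp [Int.sign_eq_one_of_pos h, abs_of_pos h]

lemma abs_mul_sign' {a : ℤ} (ha : a ≠ 0) : |a| * a.sign = a := by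
  rcases lt_trichotomy a 0 with h | h | h
  · simp [Int.sign_eq_neg_one_of_neg h, abs_of_neg h]
  · exact absurd h ha
  · simp [Int.sign_eq_one_of_pos h, abs_of_pos h]

def t₀ (p : ℤ × ℤ × ℤ) : ℤ := -(p.1.sign * (p.2.1 / (2 * |p.1|)))

def canon (p : ℤ × ℤ × ℤ) : ℤ × ℤ × ℤ := shift p (t₀ p)

lemma canon_fst (p : ℤ × ℤ × ℤ) : (canon p).1 = p.1 := rfl

lemma canon_b (p : ℤ × ℤ × ℤ) (ha : p.1 ≠ 0) :
    (canon p).2.1 = p.2.1 % (2 * |p.1|) := by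
  have hsign := sign_mul_self ha
  have : (canon p).2.1 = p.2.1 - 2 * |p.1| * (p.2.1 / (2 * |p.1|)) := by
    simp only [canon, shift, t₀]
    ring_nf
    rw [hsign]
  rw [this, Int.emod_def]

lemma canon_superdisc (p : ℤ × ℤ × ℤ) : superdisc (canon p) = superdisc p :=
  superdisc_shift p _

lemma superdisc_c_inj {a b c c' : ℤ} (ha : a ≠ 0)
    (h : superdisc (a, b, c) = superdisc (a, b, c')) : c = c' := by
  simp only [superdisc] at h
  have h2 : b ^ 2 - 4 * a * c = b ^ 2 - 4 * a * c' := mul_left_cancel₀ ha h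
  have h3 : 4 * a * c = 4 * a * c' := by linarith
  exact mul_left_cancel₀ (by simpa using ha) h3

lemma canon_eq_self (p : ℤ × ℤ × ℤ) (h0 : 0 ≤ p.2.1) (h1 : p.2.1 < 2 * |p.1|) :
    canon p = p := by
  have : p.2.1 / (2 * |p.1|) = 0 := Int.ediv_eq_zero_of_lt h0 h1
  simp only [canon, t₀, this, mul_zero, neg_zero, shift_zero]

lemma canon_shift (p : ℤ × ℤ × ℤ) (t : ℤ) (ha : p.1 ≠ 0) :
    canon (shift p t) = canon p := by
  set q1 := canon (shift p t) with hq1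
  set q2 := canon p with hq2
  have hc : q1.1 = q2.1 := rfl
  have hb : q1.2.1 = q2.2.1 := by
    rw [hq1, hq2, canon_b _ (show (shift p t).1 ≠ 0 from ha), canon_b p ha]
    show (p.2.1 + 2 * p.1 * t) % (2 * |p.1|) = p.2.1 % (2 * |p.1|)
    have : p.2.1 + 2 * p.1 * t = p.2.1 + 2 * |p.1| * (p.1.sign * t) := by
      rw [show 2 * |p.1| * (p.1.sign * t) = 2 * (|p.1| * p.1.sign) * t by ring,
        abs_mul_sign' ha]
    rw [this, Int.add_mul_emod_self_left]
  have hs : superdisc q1 = superdisc q2 := by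
    rw [hq1, hq2, canon_superdisc, canon_superdisc, superdisc_shift]
  have ha2 : q2.1 ≠ 0 := ha
  have h3 : q1.2.2 = q2.2.2 := by
    refine superdisc_c_inj (a := q2.1) (b := q2.2.1) ha2 ?_
    conv_lhs => rw [← hc, ← hb]
    exact hs
  exact Prod.ext hc (Prod.ext hb h3)

lemma quadEquiv_canon (p : ℤ × ℤ × ℤ) : quadEquiv p (canon p) := ⟨t₀ p, rfl⟩

lemma quadEquiv_canon' (p : ℤ × ℤ × ℤ) : quadEquiv (canon p) p := by
  refine ⟨-(t₀ p), ?_⟩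
  have : shift (canon p) (-(t₀ p)) = p := by
    rw [canon, shift_shift, add_neg_cancel, shift_zero]
  exact this.symm

end QC

namespace QC

def T (n : ℤ) := {p : ℤ × ℤ × ℤ // (superdisc p = n ∧ 2 ∣ p.2.1) ∧ 0 ≤ p.2.1 ∧ p.2.1 < 2 * |p.1|}

lemma fst_ne_zero {n : ℤ} (hn : n ≠ 0) {p : ℤ × ℤ × ℤ} (h : superdisc p = n) : p.1 ≠ 0 := by
  intro h0
  rw [superdisc, h0] at h
  simp at h
  exact hn h.symm

def quotEquivT (n : ℤ) (hn : n ≠ 0) :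
    Quot (fun p q : {p : ℤ × ℤ × ℤ // superdisc p = n ∧ 2 ∣ p.2.1} => quadEquiv p.1 q.1)
      ≃ T n where
  toFun := Quot.lift
    (fun p => ⟨canon p.1, by
      have ha : p.1.1 ≠ 0 := fst_ne_zero hn p.2.1
      have hpos : (0:ℤ) < 2 * |p.1.1| := by positivity
      refine ⟨⟨by rw [canon_superdisc]; exact p.2.1, ?_⟩, ?_, ?_⟩
      · rw [canon_b _ ha, Int.emod_def]
        exact dvd_sub p.2.2 (Dvd.dvd.mul_right (dvd_mul_right 2 |p.1.1|) _)
      · rw [canon_b _ ha]; exact Int.emod_nonneg _ (ne_of_gt hpos)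
      · rw [canon_b _ ha, canon_fst]; exact Int.emod_lt_of_pos _ hpos⟩)
    (by
      rintro p q ⟨t, ht⟩
      have ha : p.1.1 ≠ 0 := fst_ne_zero hn p.2.1
      have : q.1 = shift p.1 t := ht
      apply Subtype.ext
      show canon p.1 = canon q.1
      rw [this, canon_shift _ _ ha])
  invFun := fun p => Quot.mk _ ⟨p.1, p.2.1⟩
  left_inv := by
    apply Quot.ind
    intro p
    exact Quot.sound (quadEquiv_canon' p.1)
  right_inv := fun p => Subtype.ext (canon_eq_self p.1 p.2.2.1 p.2.2.2)

def U (N : ℤ) := {q : ℤ × ℤ // q.1 ≠ 0 ∧ q.1 ^ 2 ∣ q.1 * q.2 ^ 2 - N ∧ 0 ≤ q.2 ∧ q.2 < |q.1|}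

def TEquivU (N : ℤ) (hN : N ≠ 0) : T (4 * N) ≃ U N where
  toFun p := ⟨(p.1.1, p.1.2.1 / 2), by
    obtain ⟨⟨hsd, h2⟩, h0, h1⟩ := p.2
    have ha : p.1.1 ≠ 0 := fst_ne_zero (by simpa using hN) hsd
    have hb : p.1.2.1 = 2 * (p.1.2.1 / 2) := (Int.mul_ediv_cancel' h2).symm
    set B := p.1.2.1 / 2 with hB
    refine ⟨ha, ?_, ?_, ?_⟩
    · refine ⟨p.1.2.2, ?_⟩
      rw [superdisc] at hsd
      have h4 : 4 * (p.1.1 * B ^ 2 - N) = 4 * (p.1.1 ^ 2 * p.1.2.2) := by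
        linear_combination hsd - (p.1.1 * (2 * B + p.1.2.1)) * hb
      exact mul_left_cancel₀ (by norm_num) h4
    · show (0:ℤ) ≤ B
      omega
    · show B < |p.1.1|
      have h1' : p.1.2.1 < 2 * |p.1.1| := h1
      omega⟩
  invFun q := ⟨(q.1.1, 2 * q.1.2, (q.1.1 * q.1.2 ^ 2 - N) / q.1.1 ^ 2), by
    obtain ⟨ha, hdvd, h0, h1⟩ := q.2
    have hc : q.1.1 ^ 2 * ((q.1.1 * q.1.2 ^ 2 - N) / q.1.1 ^ 2) = q.1.1 * q.1.2 ^ 2 - N :=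
      Int.mul_ediv_cancel' hdvd
    refine ⟨⟨?_, ⟨q.1.2, rfl⟩⟩, show (0:ℤ) ≤ 2 * q.1.2 by omega,
      show 2 * q.1.2 < 2 * |q.1.1| by omega⟩
    rw [superdisc]
    show q.1.1 * ((2 * q.1.2) ^ 2 - 4 * q.1.1 * _) = 4 * N
    linear_combination (-4 : ℤ) * hc⟩
  left_inv p := by
    apply Subtype.ext
    obtain ⟨⟨hsd, h2⟩, h0, h1⟩ := p.2
    have ha : p.1.1 ≠ 0 := fst_ne_zero (by simpa using hN) hsd
    have hb : p.1.2.1 = 2 * (p.1.2.1 / 2) := (Int.mul_ediv_cancel' h2).symm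
    set B := p.1.2.1 / 2 with hB
    have hkey : p.1.1 * B ^ 2 - N = p.1.1 ^ 2 * p.1.2.2 := by
      rw [superdisc] at hsd
      have h4 : 4 * (p.1.1 * B ^ 2 - N) = 4 * (p.1.1 ^ 2 * p.1.2.2) := by
        linear_combination hsd - (p.1.1 * (2 * B + p.1.2.1)) * hb
      exact mul_left_cancel₀ (by norm_num) h4
    refine Prod.ext rfl (Prod.ext ?_ ?_)
    · exact hb.symm
    · show (p.1.1 * B ^ 2 - N) / p.1.1 ^ 2 = p.1.2.2
      rw [hkey]
      exact Int.mul_ediv_cancel_left _ (pow_ne_zero 2 ha)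
  right_inv q := by
    apply Subtype.ext
    refine Prod.ext rfl ?_
    show 2 * q.1.2 / 2 = q.1.2
    exact Int.mul_ediv_cancel_left _ two_ne_zero

end QC

namespace QC

def V (N a : ℤ) := {B : ℤ // 0 ≤ B ∧ B < |a| ∧ a ^ 2 ∣ a * B ^ 2 - N}

def SQ (N a : ℤ) := {x : ZMod a.natAbs // x ^ 2 = ((N / a : ℤ) : ZMod a.natAbs)}

lemma cond_iff {N a : ℤ} (ha : a ≠ 0) (haN : a ∣ N) (B : ℤ) :
    a ^ 2 ∣ a * B ^ 2 - N ↔ ((B : ZMod a.natAbs)) ^ 2 = ((N / a : ℤ) : ZMod a.natAbs) := by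
  have hNa : a * (N / a) = N := Int.mul_ediv_cancel' haN
  have h1 : a * B ^ 2 - N = a * (B ^ 2 - N / a) := by linear_combination hNa
  rw [h1, pow_two, mul_dvd_mul_iff_left ha, ← Int.natAbs_dvd,
    ← ZMod.intCast_zmod_eq_zero_iff_dvd]
  push_cast
  rw [sub_eq_zero]

instance SQfintype (N a : ℤ) [NeZero a.natAbs] : Fintype (SQ N a) := by
  unfold SQ; infer_instance

def VEquivSQ (N a : ℤ) (ha : a ≠ 0) (haN : a ∣ N) : V N a ≃ SQ N a := by
  haveI : NeZero a.natAbs := ⟨Int.natAbs_ne_zero.mpr ha⟩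
  exact
  { toFun := fun B => ⟨(B.1 : ZMod a.natAbs), (cond_iff ha haN B.1).mp B.2.2.2⟩
    invFun := fun x => ⟨((x.1.val : ℕ) : ℤ), by
      refine ⟨Int.ofNat_nonneg _, ?_, ?_⟩
      · rw [Int.abs_eq_natAbs]
        exact_mod_cast x.1.val_lt
      · refine (cond_iff ha haN _).mpr ?_
        have : (((x.1.val : ℕ) : ℤ) : ZMod a.natAbs) = x.1 := by
          push_cast
          simp [ZMod.natCast_val, ZMod.cast_id]
        rw [this]
        exact x.2⟩
    left_inv := fun B => by
      apply Subtype.ext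
      show ((((B.1 : ZMod a.natAbs)).val : ℕ) : ℤ) = B.1
      rw [ZMod.val_intCast]
      refine Int.emod_eq_of_lt B.2.1 ?_
      rw [← Int.abs_eq_natAbs]
      exact B.2.2.1
    right_inv := fun x => by
      apply Subtype.ext
      show (((x.1.val : ℕ) : ℤ) : ZMod a.natAbs) = x.1
      push_cast
      simp [ZMod.natCast_val, ZMod.cast_id] }

lemma dvd_of_cond {N a B : ℤ} (h : a ^ 2 ∣ a * B ^ 2 - N) : a ∣ N := by
  obtain ⟨k, hk⟩ := h
  exact ⟨B ^ 2 - a * k, by linear_combination - hk⟩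

def UEquivSigma (N : ℤ) (D : Finset ℤ)
    (hD : ∀ a : ℤ, a ≠ 0 → a ∣ N → a ∈ D) (hD' : ∀ a ∈ D, a ≠ 0) :
    U N ≃ Σ a : ↥D, V N (a : ℤ) where
  toFun u := ⟨⟨u.1.1, hD _ u.2.1 (dvd_of_cond u.2.2.1)⟩,
    ⟨u.1.2, u.2.2.2.1, u.2.2.2.2, u.2.2.1⟩⟩
  invFun s := ⟨((s.1 : ℤ), s.2.1), hD' _ s.1.2, s.2.2.2.2, s.2.2.1, s.2.2.2.1⟩
  left_inv u := rfl
  right_inv s := rfl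

lemma card_U_eq (N : ℤ) (D : Finset ℤ)
    (hD : ∀ a : ℤ, a ≠ 0 → a ∣ N → a ∈ D) (hD' : ∀ a ∈ D, a ≠ 0)
    (hD'' : ∀ a ∈ D, a ∣ N) :
    Nat.card (U N) = ∑ a ∈ D, Nat.card (SQ N a) := by
  haveI : ∀ a : ↥D, NeZero ((a : ℤ).natAbs) :=
    fun a => ⟨Int.natAbs_ne_zero.mpr (hD' _ a.2)⟩
  have e : U N ≃ Σ a : ↥D, SQ N (a : ℤ) :=
    (UEquivSigma N D hD hD').trans
      (Equiv.sigmaCongrRight fun a => VEquivSQ N _ (hD' _ a.2) (hD'' _ a.2))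
  rw [Nat.card_congr e]
  rw [Nat.card_eq_fintype_card, Fintype.card_sigma]
  rw [← Finset.sum_coe_sort D (fun a => Nat.card (SQ N a))]
  congr 1
  ext a
  rw [Nat.card_eq_fintype_card]

end QC

namespace QC

lemma card_SQ_natAbs_one (N a : ℤ) (h : a.natAbs = 1) : Nat.card (SQ N a) = 1 := by
  haveI : Subsingleton (ZMod a.natAbs) := h ▸ inferInstanceAs (Subsingleton (ZMod 1))
  haveI : Nonempty (SQ N a) := ⟨⟨0, Subsingleton.elim _ _⟩⟩
  haveI : Subsingleton (SQ N a) := ⟨fun x y => Subtype.ext (Subsingleton.elim _ _)⟩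
  exact Nat.card_unique

lemma card_sq_zmod (p : ℕ) [hp : Fact p.Prime] (hp2 : p ≠ 2) (c : ℤ) :
    (Nat.card {x : ZMod p // x ^ 2 = (c : ZMod p)} : ℤ) = legendreSym p c + 1 := by
  have h1 : Nat.card {x : ZMod p // x ^ 2 = (c : ZMod p)}
      = ({x : ZMod p | x ^ 2 = (c : ZMod p)}).toFinset.card := by
    rw [← Set.ncard_eq_toFinset_card', ← Nat.card_coe_set_eq]
    rfl
  rw [h1]
  exact legendreSym.card_sqrts p hp2 c

lemma card_SQ_prime (p : ℕ) [hp : Fact p.Prime] (hp2 : p ≠ 2) (N a u : ℤ)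
    (h : a.natAbs = p) (hu : N / a = u) :
    (Nat.card (SQ N a) : ℤ) = legendreSym p u + 1 := by
  unfold SQ
  rw [h, hu]
  exact card_sq_zmod p hp2 u

lemma card_sq_mul (p q : ℕ) [NeZero p] [NeZero q] (h : Nat.Coprime p q) (c : ℤ) :
    Nat.card {x : ZMod (p * q) // x ^ 2 = ((c : ℤ) : ZMod (p * q))}
      = Nat.card {x : ZMod p // x ^ 2 = (c : ZMod p)}
        * Nat.card {x : ZMod q // x ^ 2 = (c : ZMod q)} := by
  let e := ZMod.chineseRemainder h
  have e1 : {x : ZMod (p * q) // x ^ 2 = ((c : ℤ) : ZMod (p * q))}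
      ≃ {y : ZMod p × ZMod q // y.1 ^ 2 = (c : ZMod p) ∧ y.2 ^ 2 = (c : ZMod q)} := by
    refine e.toEquiv.subtypeEquiv fun x => ?_
    have key : x ^ 2 = ((c : ℤ) : ZMod (p * q)) ↔
        (e x) ^ 2 = (((c : ℤ) : ZMod p), ((c : ℤ) : ZMod q)) := by
      rw [← map_pow]
      rw [show (((c : ℤ) : ZMod p), ((c : ℤ) : ZMod q)) = ((c : ℤ) : ZMod p × ZMod q) by
        simp [Prod.ext_iff]]
      rw [← map_intCast e (c : ℤ)]
      exact ⟨fun h' => congrArg e h', fun h' => e.injective h'⟩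
    rw [key, Prod.ext_iff]
    simp [Prod.pow_fst, Prod.pow_snd]
  have e2 := e1.trans (Equiv.subtypeProdEquivProd
    (p := fun a : ZMod p => a ^ 2 = (c : ZMod p)) (q := fun b : ZMod q => b ^ 2 = (c : ZMod q)))
  rw [Nat.card_congr e2, Nat.card_prod]

end QC

namespace QC

lemma card_SQ_pq (p q : ℕ) [Fact p.Prime] [Fact q.Prime] (hp2 : p ≠ 2) (hq2 : q ≠ 2)
    (hco : Nat.Coprime p q) (N a u : ℤ) (h : a.natAbs = p * q) (hu : N / a = u) :
    (Nat.card (SQ N a) : ℤ) = (legendreSym p u + 1) * (legendreSym q u + 1) := by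
  unfold SQ
  rw [h, hu, card_sq_mul p q hco u]
  push_cast
  rw [card_sq_zmod p hp2 u, card_sq_zmod q hq2 u]

lemma nat_divisors (p q : ℕ) (hp : p.Prime) (hq : q.Prime) (d : ℕ) (h : d ∣ p * q) :
    d = 1 ∨ d = p ∨ d = q ∨ d = p * q := by
  by_cases hpd : p ∣ d
  · obtain ⟨e, rfl⟩ := hpd
    have he : e ∣ q := (Nat.mul_dvd_mul_iff_left hp.pos).mp h
    rcases (Nat.Prime.eq_one_or_self_of_dvd hq e he) with h1 | h1 <;> subst h1 <;> simp
  · have hco : Nat.Coprime p d := (Nat.Prime.coprime_iff_not_dvd hp).mpr hpd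
    have hd : d ∣ q := Nat.Coprime.dvd_of_dvd_mul_left hco.symm h
    rcases (Nat.Prime.eq_one_or_self_of_dvd hq d hd) with h1 | h1 <;> subst h1 <;> simp

end QC

/-- For primes `p₁ ≡ 1 (mod 4)` and `p₃ ≡ 3 (mod 4)`, the number of classes of
integer quadratics with `b` even and superdiscriminant `4·p₁·p₃` is
`10 + 2·(p₃/p₁)` (Legendre symbol). -/
theorem quad_count_even_legendre (p₁ p₃ : ℕ) (hp₁ : p₁.Prime) (hp₃ : p₃.Prime)
    (h₁ : p₁ % 4 = 1) (h₃ : p₃ % 4 = 3) :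
    (quadCount (4 * (p₁ : ℤ) * (p₃ : ℤ)) (fun p => 2 ∣ p.2.1) : ℤ)
    = 10 + 2 * @legendreSym p₁ ⟨hp₁⟩ (p₃ : ℤ) := by
  haveI F₁ : Fact p₁.Prime := ⟨hp₁⟩
  haveI F₃ : Fact p₃.Prime := ⟨hp₃⟩
  have hp₁2 : p₁ ≠ 2 := by omega
  have hp₃2 : p₃ ≠ 2 := by omega
  have hp₁5 : 5 ≤ p₁ := by
    have := hp₁.two_le
    rcases Nat.lt_or_ge p₁ 5 with h | h
    · interval_cases p₁ <;> omega
    · exact h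
  have hp₃3 : 3 ≤ p₃ := by have := hp₃.two_le; omega
  have hne : p₁ ≠ p₃ := by omega
  set P₁ : ℤ := (p₁ : ℤ) with hP₁
  set P₃ : ℤ := (p₃ : ℤ) with hP₃
  have h5 : (5 : ℤ) ≤ P₁ := by rw [hP₁]; exact_mod_cast hp₁5
  have h3 : (3 : ℤ) ≤ P₃ := by rw [hP₃]; exact_mod_cast hp₃3
  have hPne : P₁ ≠ P₃ := by rw [hP₁, hP₃]; exact_mod_cast hne
  set N : ℤ := P₁ * P₃ with hN
  have hNpos : 0 < N := by positivity
  have hN0 : N ≠ 0 := ne_of_gt hNpos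
  have hP₁0 : P₁ ≠ 0 := by omega
  have hP₃0 : P₃ ≠ 0 := by omega
  have hlt1 : P₁ < N := by
    rw [hN]; nlinarith
  have hlt3 : P₃ < N := by
    rw [hN]; nlinarith
  set D : Finset ℤ := {1, -1, P₁, -P₁, P₃, -P₃, N, -N} with hD
  have hmemD : ∀ a : ℤ, a ≠ 0 → a ∣ N → a ∈ D := by
    intro a ha hdvd
    have h1 : a.natAbs ∣ p₁ * p₃ := by
      have := Int.natAbs_dvd_natAbs.mpr hdvd
      simpa [hN, hP₁, hP₃, Int.natAbs_mul] using this
    have h2 := QC.nat_divisors p₁ p₃ hp₁ hp₃ _ h1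
    simp only [hD, Finset.mem_insert, Finset.mem_singleton]
    rcases Int.natAbs_eq a with he | he <;> rw [he] <;>
      rcases h2 with h | h | h | h <;> rw [h] <;> push_cast <;> tauto
  have hD0 : ∀ a ∈ D, a ≠ 0 := by
    intro a haD
    simp only [hD, Finset.mem_insert, Finset.mem_singleton] at haD
    rcases haD with h | h | h | h | h | h | h | h <;> subst h <;> omega
  have hDdvd : ∀ a ∈ D, a ∣ N := by
    intro a haD
    simp only [hD, Finset.mem_insert, Finset.mem_singleton] at haD
    rcases haD with h | h | h | h | h | h | h | h <;> subst h
    · exact one_dvd _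
    · exact (neg_dvd).mpr (one_dvd _)
    · exact Dvd.intro _ rfl
    · exact (neg_dvd).mpr (Dvd.intro _ rfl)
    · exact Dvd.intro_left _ rfl
    · exact (neg_dvd).mpr (Dvd.intro_left _ rfl)
    · exact dvd_rfl
    · exact (neg_dvd).mpr dvd_rfl
  -- reduce to card of U
  have hmain : quadCount (4 * P₁ * P₃) (fun p => 2 ∣ p.2.1) = Nat.card (QC.U N) := by
    have e1 := QC.quotEquivT (4 * P₁ * P₃) (by positivity)
    have e2 : QC.T (4 * P₁ * P₃) ≃ QC.U N := by
      rw [show 4 * P₁ * P₃ = 4 * N by rw [hN]; ring]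
      exact QC.TEquivU N hN0
    exact Nat.card_congr (e1.trans e2)
  rw [hmain, QC.card_U_eq N D hmemD hD0 hDdvd]
  -- evaluate the sum
  have hco : Nat.Coprime p₁ p₃ := (Nat.coprime_primes hp₁ hp₃).mpr hne
  have c1 : Nat.card (QC.SQ N 1) = 1 := QC.card_SQ_natAbs_one N 1 rfl
  have c2 : Nat.card (QC.SQ N (-1)) = 1 := QC.card_SQ_natAbs_one N (-1) rfl
  have c3 : (Nat.card (QC.SQ N P₁) : ℤ) = legendreSym p₁ P₃ + 1 :=
    QC.card_SQ_prime p₁ hp₁2 N P₁ P₃ (by rw [hP₁]; exact Int.natAbs_natCast p₁)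
      (by rw [hN]; exact Int.mul_ediv_cancel_left P₃ hP₁0)
  have c4 : (Nat.card (QC.SQ N (-P₁)) : ℤ) = legendreSym p₁ (-P₃) + 1 :=
    QC.card_SQ_prime p₁ hp₁2 N (-P₁) (-P₃)
      (by rw [hP₁]; simp)
      (by rw [show N = (-P₁) * (-P₃) by rw [hN]; ring]
          exact Int.mul_ediv_cancel_left (-P₃) (neg_ne_zero.mpr hP₁0))
  have c5 : (Nat.card (QC.SQ N P₃) : ℤ) = legendreSym p₃ P₁ + 1 :=
    QC.card_SQ_prime p₃ hp₃2 N P₃ P₁ (by rw [hP₃]; exact Int.natAbs_natCast p₃)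
      (by rw [show N = P₃ * P₁ by rw [hN]; ring]
          exact Int.mul_ediv_cancel_left P₁ hP₃0)
  have c6 : (Nat.card (QC.SQ N (-P₃)) : ℤ) = legendreSym p₃ (-P₁) + 1 :=
    QC.card_SQ_prime p₃ hp₃2 N (-P₃) (-P₁)
      (by rw [hP₃]; simp)
      (by rw [show N = (-P₃) * (-P₁) by rw [hN]; ring]
          exact Int.mul_ediv_cancel_left (-P₁) (neg_ne_zero.mpr hP₃0))
  have c7 : (Nat.card (QC.SQ N N) : ℤ)
      = (legendreSym p₁ 1 + 1) * (legendreSym p₃ 1 + 1) :=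
    QC.card_SQ_pq p₁ p₃ hp₁2 hp₃2 hco N N 1
      (by rw [hN, hP₁, hP₃]; simp [Int.natAbs_mul])
      (Int.ediv_self hN0)
  have c8 : (Nat.card (QC.SQ N (-N)) : ℤ)
      = (legendreSym p₁ (-1) + 1) * (legendreSym p₃ (-1) + 1) :=
    QC.card_SQ_pq p₁ p₃ hp₁2 hp₃2 hco N (-N) (-1)
      (by rw [hN, hP₁, hP₃]; simp [Int.natAbs_mul])
      (by rw [Int.ediv_neg, Int.ediv_self hN0])
  have l1 : legendreSym p₁ 1 = 1 := legendreSym.at_one p₁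
  have l2 : legendreSym p₃ 1 = 1 := legendreSym.at_one p₃
  have l3 : legendreSym p₁ (-1) = 1 := by
    rw [legendreSym.at_neg_one hp₁2]; exact ZMod.χ₄_nat_one_mod_four h₁
  have l4 : legendreSym p₃ (-1) = -1 := by
    rw [legendreSym.at_neg_one hp₃2]; exact ZMod.χ₄_nat_three_mod_four h₃
  have l5 : legendreSym p₁ (-P₃) = legendreSym p₁ P₃ := by
    rw [show -P₃ = (-1) * P₃ by ring, legendreSym.mul p₁, l3, one_mul]
  have l6 : legendreSym p₃ (-P₁) = -legendreSym p₃ P₁ := by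
    rw [show -P₁ = (-1) * P₁ by ring, legendreSym.mul p₃, l4, neg_one_mul]
  rw [hD]
  rw [Finset.sum_insert (by simp only [Finset.mem_insert, Finset.mem_singleton]; omega),
    Finset.sum_insert (by simp only [Finset.mem_insert, Finset.mem_singleton]; omega),
    Finset.sum_insert (by simp only [Finset.mem_insert, Finset.mem_singleton]; omega),
    Finset.sum_insert (by simp only [Finset.mem_insert, Finset.mem_singleton]; omega),
    Finset.sum_insert (by simp only [Finset.mem_insert, Finset.mem_singleton]; omega),
    Finset.sum_insert (by simp only [Finset.mem_insert, Finset.mem_singleton]; omega),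
    Finset.sum_insert (by simp only [Finset.mem_singleton]; omega),
    Finset.sum_singleton, c1, c2]
  push_cast
  rw [c3, c4, c5, c6, c7, c8, l1, l2, l3, l4, l5, l6]
  ring
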